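/- arXiv:2002.00503 — 2 statements merged into one kernel-verified Lean document; each statement's English description precedes it below -/
import Mathlib

section
/- The septic normalized proper Zolotarev polynomial Z at parameter t = −21 satisfies the Abel–Pell differential equation: for every real x, (1 − x^2)·(x − α)·(x − β)·(Z'(x))^2 + 49·(x − γ)^2·(Z(x))^2 = 49·(x − γ)^2. -/
set_option maxHeartbeats 4000000


noncomputable section

def b0 : ℝ := (5236829509 - 598896224 * Real.sqrt 6) / 6591796875

def b1 : ℝ :=
  -(16 / 6591796875) * Real.sqrt (2 * (1174132032293998751 + 484070220858892414 * Real.sqrt 6))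

def b2 : ℝ := -(8 / 2197265625) * (1876889773 + 537098572 * Real.sqrt 6)

def b3 : ℝ :=
  (16 / 6591796875) * Real.sqrt (2 * (56229826406521238759 + 22960487256932311726 * Real.sqrt 6))

def b4 : ℝ := (8 / 6591796875) * (13748181869 + 5603740016 * Real.sqrt 6)

def b5 : ℝ :=
  -(32 / 2197265625) * Real.sqrt (2 * (4907729982259476719 + 2003572376153817166 * Real.sqrt 6))

def b6 : ℝ := -(256 / 6591796875) * (299877839 + 122424446 * Real.sqrt 6)

def b7 : ℝ :=
  (1024 / 6591796875) * Real.sqrt (2 * (11553696783009431 + 4716776960201434 * Real.sqrt 6))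

/-- The septic normalized proper Zolotarev polynomial at parameter t = −21. -/
def Z (x : ℝ) : ℝ :=
  b0 + b1 * x + b2 * x ^ 2 + b3 * x ^ 3 + b4 * x ^ 4 + b5 * x ^ 5 + b6 * x ^ 6 + b7 * x ^ 7

def α : ℝ := (1 / 4) * Real.sqrt ((-1816103 + 742750 * Real.sqrt 6) / 142)

def β : ℝ := (1 / 4) * Real.sqrt ((-330503 + 136350 * Real.sqrt 6) / 142)

def γ : ℝ := (1 / 7) * Real.sqrt ((-2665 + 1138 * Real.sqrt 6) / 2)

lemma sqrt_scale {X Y c : ℝ} (hc : 0 ≤ c) (h : X = c ^ 2 * Y) :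
    Real.sqrt X = c * Real.sqrt Y := by
  rw [h, Real.sqrt_mul (sq_nonneg c) Y, Real.sqrt_sq hc]

/-- the septic normalized proper Zolotarev polynomial Z at parameter t = −21
satisfies the Abel–Pell differential equation. -/
theorem stmt9 :
    ∀ x : ℝ,
      (1 - x ^ 2) * (x - α) * (x - β) * (deriv Z x) ^ 2 + 49 * (x - γ) ^ 2 * (Z x) ^ 2 =
        49 * (x - γ) ^ 2 := by
  intro x
  have hs : Real.sqrt 6 ^ 2 = 6 := Real.sq_sqrt (by norm_num)
  have hs0 : (0:ℝ) ≤ Real.sqrt 6 := Real.sqrt_nonneg 6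
  have ht : Real.sqrt ((-1816103 + 742750 * Real.sqrt 6) / 142) ^ 2 = (-1816103 + 742750 * Real.sqrt 6) / 142 :=
    Real.sq_sqrt (by nlinarith [hs, hs0])
  have e1 : Real.sqrt (2 * (1174132032293998751 + 484070220858892414 * Real.sqrt 6)) =
      ((2922878564566/12911) + (1198276225724/12911) * Real.sqrt 6) * Real.sqrt ((-1816103 + 742750 * Real.sqrt 6) / 142) :=
    sqrt_scale (by positivity) (by linear_combination ((-533244703490642314324015862000/11835268391) * Real.sqrt 6 + (-1297579209491035008523926562936/11835268391)) * hs)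
  have e3 : Real.sqrt (2 * (56229826406521238759 + 22960487256932311726 * Real.sqrt 6)) =
      ((20214748554098/12911) + (8257665251572/12911) * Real.sqrt 6) * Real.sqrt ((-1816103 + 742750 * Real.sqrt 6) / 142) :=
    sqrt_scale (by positivity) (by linear_combination ((-25323703024281926993250985958000/11835268391) * Real.sqrt 6 + (-62065596099825780876493030756024/11835268391)) * hs)
  have e5 : Real.sqrt (2 * (4907729982259476719 + 2003572376153817166 * Real.sqrt 6)) =
      ((5973583178458/12911) + (2438707231412/12911) * Real.sqrt 6) * Real.sqrt ((-1816103 + 742750 * Real.sqrt 6) / 142) :=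
    sqrt_scale (by positivity) (by linear_combination ((-2208675923220981509634416678000/11835268391) * Real.sqrt 6 + (-5419800378714179107924297944184/11835268391)) * hs)
  have e7 : Real.sqrt (2 * (11553696783009431 + 4716776960201434 * Real.sqrt 6)) =
      ((289837954394/12911) + (118325849416/12911) * Real.sqrt 6) * Real.sqrt ((-1816103 + 742750 * Real.sqrt 6) / 142) :=
    sqrt_scale (by positivity) (by linear_combination ((-5199623840936650413059672000/11835268391) * Real.sqrt 6 + (-12759215443457890764289983616/11835268391)) * hs)
  have eb : Real.sqrt ((-330503 + 136350 * Real.sqrt 6) / 142) =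
      ((9439/12911) + (1600/12911) * Real.sqrt 6) * Real.sqrt ((-1816103 + 742750 * Real.sqrt 6) / 142) :=
    sqrt_scale (by positivity) (by linear_combination ((-950720000000/11835268391) * Real.sqrt 6 + (-8892695760000/11835268391)) * hs)
  have eg : Real.sqrt ((-2665 + 1138 * Real.sqrt 6) / 2) =
      ((12659/12911) + (3448/12911) * Real.sqrt 6) * Real.sqrt ((-1816103 + 742750 * Real.sqrt 6) / 142) :=
    sqrt_scale (by positivity) (by linear_combination ((-4415167448000/11835268391) * Real.sqrt 6 + (-21624168817744/11835268391)) * hs)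
  have h' := (((((((hasDerivAt_const x b0).add ((hasDerivAt_id x).const_mul b1)).add
    ((hasDerivAt_pow 2 x).const_mul b2)).add ((hasDerivAt_pow 3 x).const_mul b3)).add
    ((hasDerivAt_pow 4 x).const_mul b4)).add ((hasDerivAt_pow 5 x).const_mul b5)).add
    ((hasDerivAt_pow 6 x).const_mul b6)).add ((hasDerivAt_pow 7 x).const_mul b7)
  have h : HasDerivAt Z (b1 + 2 * b2 * x + 3 * b3 * x ^ 2 + 4 * b4 * x ^ 3 + 5 * b5 * x ^ 4
      + 6 * b6 * x ^ 5 + 7 * b7 * x ^ 6) x := by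
    refine h'.congr_deriv ?_
    norm_num
    ring
  rw [h.deriv]
  simp only [Z, b0, b1, b2, b3, b4, b5, b6, b7, α, β, γ]
  rw [e1, e3, e5, e7, eb, eg]
  set s : ℝ := Real.sqrt 6 with hsdef
  set t : ℝ := Real.sqrt ((-1816103 + 742750 * s) / 142) with htdef
  linear_combination ((-5217558689590737824577117326668544/29509585299235060214996337890625) + (1290231121841586280861160196544/93516291441237866878509521484375) * t^2 + (-8423045788259513646968629056022016/81971070275652945041656494140625) * s + (1276604125173359603032153279232/93516291441237866878509521484375) * s * t^2 + (2936220043153431027947006114432/171421183288872241973876953125) * s^2 + (396173907468757534402038497024/93516291441237866878509521484375) * s^2 * t^2 + (4211522894129756823484314528011008/245913210826958835124969482421875) * s^3 + (1470326695050603109707956224/3740651657649514675140380859375) * s^3 * t^2 + (4551657773788379134231695106654208/2213218897442629516124725341796875) * s^4 + (-26531664991235351022765005726336/93516291441237866878509521484375) * x * t + (-157765686159125195024568300032/692713269935095310211181640625) * x * s * t + (-189836841770743754058857984/7243148589670658111572265625) * x * s^2 * t + (1412663357122465819336834097152/93516291441237866878509521484375) * x * s^3 * t + (273019087216509084713205628928/93516291441237866878509521484375)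 * x * s^4 * t + (324899779205427050431481795599464484234432/85724607554645369048058986663818359375) * x^2 + (-71486449005925830748770816020290496/241477767759564419853687286376953125) * x^2 * t^2 + (68133824392107617248217752843316044840192/85724607554645369048058986663818359375) * x^2 * s + (-221129162953288249959884513377031936/1207388838797822099268436431884765625) * x^2 * s * t^2 + (-20913365274347609097405579227290002946432/17144921510929073809611797332763671875) * x^2 * s^2 + (24669080193396905409538885247134976/1207388838797822099268436431884765625) * x^2 * s^2 * t^2 + (-21089050879948050923661011130638151257344/85724607554645369048058986663818359375) * x^2 * s^3 + (11103420969261746096221419158454272/402462946265940699756145477294921875) * x^2 * s^3 * t^2 + (1680904605129374950353275671770812071936/17144921510929073809611797332763671875) * x^2 * s^4 + (4370069715188721348199354498023424/1207388838797822099268436431884765625) * x^2 * s^4 * t^2 + (12983477123825691125500282213627592704/685796860437162952384471893310546875) * x^2 * s^5 + (-359502878160933374115625788774592/93516291441237866878509521484375) * x^3 * t + (-183639762717002084260459014183296/93516291441237866878509521484375) * x^3 * s * t + (1181883591347540281183644443648/3740651657649514675140380859375) * x^3 * s^2 * t + (27990240140728382731502795104256/93516291441237866878509521484375) * x^3 *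 s^3 * t + (3994883882711566449161831186432/93516291441237866878509521484375) * x^3 * s^4 * t + (-1531657591356906746986309842278528847294176/28574869184881789682686328887939453125) * x^4 + (1011439124692042244723056940921722048/241477767759564419853687286376953125) * x^4 * t^2 + (-332766248004666895800602545484225149348928/28574869184881789682686328887939453125) * x^4 * s + (3166224314395951106405625653828221696/1207388838797822099268436431884765625) * x^4 * s * t^2 + (1454159699129979339476418212837263811216768/85724607554645369048058986663818359375) * x^4 * s^2 + (-102118036629897988244097519680959232/402462946265940699756145477294921875) * x^4 * s^2 * t^2 + (300606567471981542473758299364568034855168/85724607554645369048058986663818359375) * x^4 * s^3 + (-456208846357137756571146324641693696/1207388838797822099268436431884765625) * x^4 * s^3 * t^2 + (-114716060030346970404316086968647510605824/85724607554645369048058986663818359375) * x^4 * s^4 + (-60230808321774887002791231337529344/1207388838797822099268436431884765625) * x^4 * s^4 * t^2 + (-178945731523993189285292748303799681024/685796860437162952384471893310546875) * x^4 * s^5 + (1075249614699999423370700199461312/31172097147079288959503173828125) * x^5 * t + (428367652761683822548530781399936/18703258288247573375701904296875) * x^5 * s * t + (-103530660345267760569527724318208/93516291441237866878509521484375) * x^5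 * s^2 * t + (-106945966625295201332174845362176/31172097147079288959503173828125) * x^5 * s^3 * t + (-11519660163533275159886545289216/18703258288247573375701904296875) * x^5 * s^4 * t + (5033039702780297538952951648052758991917792/17144921510929073809611797332763671875) * x^6 + (-5543310069487693213223093068971146048/241477767759564419853687286376953125) * x^6 * t^2 + (47057693809863283906716991637572717162432/685796860437162952384471893310546875) * x^6 * s + (-3561981062620094419848179209954308352/241477767759564419853687286376953125) * x^6 * s * t^2 + (-308231769734656600416805429599859493539712/3428984302185814761922359466552734375) * x^6 * s^2 + (48235298992133137211498953241321216/48295553551912883970737457275390625) * x^6 * s^2 * t^2 + (-336168336471122679115726779899428566477568/17144921510929073809611797332763671875) * x^6 * s^3 + (156301488708507743811247592293974016/80492589253188139951229095458984375) * x^6 * s^3 * t^2 + (13003889073654947988018046559435496341504/1904991278992119312179088592529296875) * x^6 * s^4 + (62852081312611589268900176019587072/241477767759564419853687286376953125) * x^6 * s^4 * t^2 + (186733533579769031717902422954193190912/137159372087432590476894378662109375) * x^6 * s^5 + (-1484499188511185303263899674263808/18703258288247573375701904296875) * x^7 * t + (-1291142259748761515467769073559552/18703258288247573375701904296875) * x^7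 * s * t + (-70734590528106428419628791911424/18703258288247573375701904296875) * x^7 * s^2 * t + (195607676707427691641803730845696/18703258288247573375701904296875) * x^7 * s^3 * t + (15010198421293767159100298756096/6234419429415857791900634765625) * x^7 * s^4 * t + (-886777418270648976323826738387650421076736/1142994767395271587307453155517578125) * x^8 + (14659345328738025060662466989747884544/241477767759564419853687286376953125) * x^8 * t^2 + (-41051570739310329793529140255390156922368/211665697665791034686565399169921875) * x^8 * s + (9658692718551646249759041667518263296/241477767759564419853687286376953125) * x^8 * s * t^2 + (3940543146942510338542110454667572451372032/17144921510929073809611797332763671875) * x^8 * s^2 + (-78607008788784650024030033507403776/48295553551912883970737457275390625) * x^8 * s^2 * t^2 + (181360792598464421386296333764243612747776/3428984302185814761922359466552734375) * x^8 * s^3 + (-386722485420445181076760314351321088/80492589253188139951229095458984375) * x^8 * s^3 * t^2 + (-95725066723778300013386073451124716863488/5714973836976357936537265777587890625) * x^8 * s^4 + (-158143778458328385763332932995383296/241477767759564419853687286376953125) * x^8 * s^4 * t^2 + (-469845165799693634102862143929283772416/137159372087432590476894378662109375) * x^8 * s^5 + (19275091977868472818264404994816/3740651657649514675140380859375) * x^9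 * t + (1119077128262768361880743503990272/18703258288247573375701904296875) * x^9 * s * t + (27762970801385774787154825674752/1246883885883171558380126953125) * x^9 * s^2 * t + (-198625912552847353252615625506816/18703258288247573375701904296875) * x^9 * s^3 * t + (-77029658362958114585046696329216/18703258288247573375701904296875) * x^9 * s^4 * t + (6082798265408065609888867073634584602718336/5714973836976357936537265777587890625) * x^10 + (-100608635837582781618488101993397373184/1207388838797822099268436431884765625) * x^10 * t^2 + (8081963314662405294105253013037536273181952/28574869184881789682686328887939453125) * x^10 * s + (-67880803872509231545070865920522888192/1207388838797822099268436431884765625) * x^10 * s * t^2 + (-26154287857811876019923978868763557751184896/85724607554645369048058986663818359375) * x^10 * s^2 + (358327153503663728816624834947412992/402462946265940699756145477294921875) * x^10 * s^2 * t^2 + (-6343608515199763872196771216545214161918976/85724607554645369048058986663818359375) * x^10 * s^3 + (1487061644788332011459320985332809728/241477767759564419853687286376953125) * x^10 * s^3 * t^2 + (1823538853930510602808500806978805661106176/85724607554645369048058986663818359375) * x^10 * s^4 + (206453786837572602955662142049615872/241477767759564419853687286376953125) * x^10 * s^4 * t^2 + (613374200694428203381272224029408755712/137159372087432590476894378662109375)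 * x^10 * s^5 + (6226273733965253052762002732111872/31172097147079288959503173828125) * x^11 * t + (983822971044156951256818834055168/18703258288247573375701904296875) * x^11 * s * t + (-3503865030664536774256826218602496/93516291441237866878509521484375) * x^11 * s^2 * t + (-26184067817738948348960847167488/10390699049026429653167724609375) * x^11 * s^3 * t + (303618324005170240134596035346432/93516291441237866878509521484375) * x^11 * s^4 * t + (-62611999616991023482122234234602837510889472/85724607554645369048058986663818359375) * x^12 + (13814323708814034917206839792996401152/241477767759564419853687286376953125) * x^12 * t^2 + (-17570182397177420675371606081744467222495232/85724607554645369048058986663818359375) * x^12 * s + (47635851922899292116539364171561926656/1207388838797822099268436431884765625) * x^12 * s * t^2 + (1158806657679251073194100936687282205196288/5714973836976357936537265777587890625) * x^12 * s^2 + (311758999379779408885440879724724224/1207388838797822099268436431884765625) * x^12 * s^2 * t^2 + (4433749623938772220480237086799820057083904/85724607554645369048058986663818359375) * x^12 * s^3 + (-4764459573638909773431257065792208896/1207388838797822099268436431884765625) * x^12 * s^3 * t^2 + (-25706489839952740459800036630916388356096/1904991278992119312179088592529296875) * x^12 * s^4 + (-224829731478429973853290305419214848/402462946265940699756145477294921875)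 * x^12 * s^4 * t^2 + (-667969132222415452318125497400487313408/228598953479054317461490631103515625) * x^12 * s^5 + (-23083702402350341221334918376194048/93516291441237866878509521484375) * x^13 * t + (-3471670596928540460724117195194368/31172097147079288959503173828125) * x^13 * s * t + (499256164252766132036662372335616/18703258288247573375701904296875) * x^13 * s^2 * t + (963119845374473902842703085830144/93516291441237866878509521484375) * x^13 * s^3 * t + (-90292610662047874330309345411072/93516291441237866878509521484375) * x^13 * s^4 * t + (16998363364686811907450873911536216102535168/85724607554645369048058986663818359375) * x^14 + (-750383222207349239803463825570922496/48295553551912883970737457275390625) * x^14 * t^2 + (5006940541477820646285491744526768034545664/85724607554645369048058986663818359375) * x^14 * s + (-13200183717350595823303299810298167296/1207388838797822099268436431884765625) * x^14 * s * t^2 + (-4575794721577004158135296672676140975915008/85724607554645369048058986663818359375) * x^14 * s^2 + (-350877686597514844225949423154233344/1207388838797822099268436431884765625) * x^14 * s^2 * t^2 + (-1224304882183363929751733764689004318425088/85724607554645369048058986663818359375) * x^14 * s^3 + (134210033236296537220121005731610624/134154315421980233252048492431640625) * x^14 * s^3 * t^2 + (290089419053712508986023360367932645310464/85724607554645369048058986663818359375)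 * x^14 * s^4 + (174539484582597054908315867728052224/1207388838797822099268436431884765625) * x^14 * s^4 * t^2 + (518556808694895850132606443020043157504/685796860437162952384471893310546875) * x^14 * s^5 + (8505785542615967213938088622424064/93516291441237866878509521484375) * x^15 * t + (176772898381394690666780283633664/3740651657649514675140380859375) * x^15 * s * t + (-644531094037013526716363080466432/93516291441237866878509521484375) * x^15 * s^2 * t + (-420937059409690304202311081132032/93516291441237866878509521484375) * x^15 * s^3 * t) * ht + ((-2368905997210451933856994127078680691008/6285541668737067825794219970703125) + (-10197631402355298658772416462795558878208/157138541718426695644855499267578125) * s + (9943349164291747607485593681420779308288/157138541718426695644855499267578125) * s^2 + (13522975245925274407802366161869651968/1257108333747413565158843994140625) * s^3 + (-1340318663717359756709762678916633856/2213218897442629516124725341796875) * x * t + (-316971039928692282265004454521017856/1327931338465577709674835205078125) * x * s * t + (30745829175085982724307035741478912/737739632480876505374908447265625) * x * s^2 * t + (811139708120248490682933923545088/53117253538623108386993408203125) * x * s^3 * t + (49170973643820576970590525584829140845892012864/6086447136379821202412188053131103515625) * x^2 + (-3266143944974207945866733445581929005144348928/2028815712126607067470729351043701171875) * x^2 * s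 + (-183523846303436077284930602535067009272064/94283125031056017386913299560546875) * x^2 * s^2 + (13180172031691260322450690589647557332353024/48691577091038569619297504425048828125) * x^2 * s^3 + (38573910534886128333861338456687577923584/389532616728308556954380035400390625) * x^2 * s^4 + (-10890521927786459592359618543081291392/1327931338465577709674835205078125) * x^3 * t + (-5553896619717033731426236754023478272/6639656692327888548374176025390625) * x^3 * s * t + (6767315130240941155400775980256714752/6639656692327888548374176025390625) * x^3 * s^2 * t + (167166197401916393245912682463232/748130331529902935028076171875) * x^3 * s^3 * t + (-695411636443350000235670744983209589631639033984/6086447136379821202412188053131103515625) * x^4 + (133325207945710868919248064656395798520935854848/6086447136379821202412188053131103515625) * x^4 * s + (476090947701820524356685863250500073196288/17459837968714077293872833251953125) * x^4 * s^2 + (-178329474421201547550929086347463997956538368/48691577091038569619297504425048828125) * x^4 * s^3 + (-531647768357783765366604755210588852322304/389532616728308556954380035400390625) * x^4 * s^4 + (488047933196866232110707503353080764288/6639656692327888548374176025390625) * x^5 * t + (124527889070695844660639249440251878912/6639656692327888548374176025390625) * x^5 * s * t + (-13369790322294767427994142638136344576/1327931338465577709674835205078125) * x^5 * s^2 * t +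 (-34224910345857360500022926054260736/10623450707724621677398681640625) * x^5 * s^3 * t + (761709555513591495227452202578637739250983966592/1217289427275964240482437610626220703125) * x^6 + (-133479211736145307933931949808726004350211765248/1217289427275964240482437610626220703125) * x^6 * s + (-13872449867908528841096889976762244297476864/94283125031056017386913299560546875) * x^6 * s^2 + (178147324673050015346625674935556178378047488/9738315418207713923859500885009765625) * x^6 * s^3 + (554785328265493793233888098596907970199552/77906523345661711390876007080078125) * x^6 * s^4 + (-224396225499816508570782453588050002432/1327931338465577709674835205078125) * x^7 * t + (-103472089771107283642932402147857755136/1327931338465577709674835205078125) * x^7 * s * t + (31753701361960647355059565735057031168/1327931338465577709674835205078125) * x^7 * s^2 * t + (44595299509663782229686987604361216/3541150235908207225799560546875) * x^7 * s^3 * t + (-2013098122466597979759389418294992076500086598656/1217289427275964240482437610626220703125) * x^8 + (2370956135496263601999760978298555489414125568/9016958720562698077647686004638671875) * x^8 * s + (36144964115715949029647735687505883757275136/94283125031056017386913299560546875) * x^8 * s^2 + (-85310782427375096806350989716334515587252224/1947663083641542784771900177001953125) * x^8 * s^3 + (-1395909987590889786919603429613902087847936/77906523345661711390876007080078125) * x^8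 * s^4 + (13892341731698157690004725744041619968/1327931338465577709674835205078125) * x^9 * t + (18128871355166835665233693686673866752/147547926496175301074981689453125) * x^9 * s * t + (-1272600484447341809355532583601569792/442643779488525903224945068359375) * x^9 * s^2 * t + (-228855114996348558432173734794100736/10623450707724621677398681640625) * x^9 * s^3 * t + (2761745878173583641356789430988222435730213376512/1217289427275964240482437610626220703125) * x^10 + (-1978082585541343966357149261914238500699991924736/6086447136379821202412188053131103515625) * x^10 * s + (-9057752619117042255292040336912932614771712/17459837968714077293872833251953125) * x^10 * s^2 + (2632857120018164142330709322842828295459373056/48691577091038569619297504425048828125) * x^10 * s^3 + (1822334750263146192245759777591373413220352/77906523345661711390876007080078125) * x^10 * s^4 + (2831072864264081783400542876109162917888/6639656692327888548374176025390625) * x^11 * t + (-16384131572136887923503392780307963904/265586267693115541934967041015625) * x^11 * s * t + (-363218048212696061797438143341813301248/6639656692327888548374176025390625) * x^11 * s^2 * t + (902050040619360783439884821014249472/53117253538623108386993408203125) * x^11 * s^3 * t + (-3158605041865406402268827796260861006807901257728/2028815712126607067470729351043701171875) * x^12 + (1216320809481669801293221854362816588565241298944/6086447136379821202412188053131103515625)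 * x^12 * s + (33132362855905206989138633012019680963854336/94283125031056017386913299560546875) * x^12 * s^2 + (-539059347249231193490336297354030241418313728/16230525697012856539765834808349609375) * x^12 * s^3 + (-1984536291832796308837150852776847808135168/129844205576102852318126678466796875) * x^12 * s^4 + (-233069260538060514310748310357661057024/442643779488525903224945068359375) * x^13 * t + (-149094403229446834933232917747301613568/6639656692327888548374176025390625) * x^13 * s * t + (146556324375511270341885918354903924736/2213218897442629516124725341796875) * x^13 * s^2 * t + (-268259346276944234635349065216294912/53117253538623108386993408203125) * x^13 * s^3 * t + (2572563103192611656816154605659726440284017393664/6086447136379821202412188053131103515625) * x^14 + (-32707705330362004879438792896585508065799831552/676271904042202355823576450347900390625) * x^14 * s + (-44431731206327844009590626593299850787291136/471415625155280086934566497802734375) * x^14 * s^2 + (390979376037966645140786924159113169981145088/48691577091038569619297504425048828125) * x^14 * s^3 + (1540632278632535570743973742212548220944384/389532616728308556954380035400390625) * x^14 * s^4 + (1287911095080635830785790295874870444032/6639656692327888548374176025390625) * x^15 * t + (15874421461618055198008393520038019072/737739632480876505374908447265625) * x^15 * s * t + (-1250604003506189893785066222043267072/53117253538623108386993408203125) *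 x^15 * s^2 * t) * hs
end
end

section
/- The septic normalized proper Zolotarev polynomial Z at parameter t = −21 has uniform norm 1 on the union of intervals [−1, 1] ∪ [α, β]: one has |Z(x)| ≤ 1 for every x ∈ [−1, 1] ∪ [α, β], and there exists x ∈ [−1, 1] with |Z(x)| = 1. -/
noncomputable section

set_option maxHeartbeats 1000000 in
private lemma zkey (u t : ℝ) (hu : u ^ 2 = 6) (ht : t ^ 2 = 2 * (11553696783009431 + 4716776960201434 * u)) (x : ℝ) :
    1 - ((5236829509 - 598896224 * u) / 6591796875 + -(16 / 6591796875) * ((((547162153751 : ℝ) + (-223377993078 : ℝ) * u) / 5041) * (t)) * x + -(8 / 2197265625) * (1876889773 + 537098572 * u) * x ^ 2 + 16 / 6591796875 * ((((548543689501 : ℝ) + (-223941879906 : ℝ) * u) / 5041) * (t)) * x ^ 3 + 8 / 6591796875 * (13748181869 + 5603740016 * u) * x ^ 4 + -(32 / 2197265625) * ((((3243799 : ℝ) + (-1323678 : ℝ) * u) / 71) * (t)) * x ^ 5 + -(256 / 6591796875) * (299877839 + 122424446 * u) * x ^ 6 + 1024 / 6591796875 * (t) * x ^ 7) ^ 2 =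 (1 - x ^ 2) * (x ^ 2 - ((((-4137518493 : ℝ) + (1689134852 : ℝ) * u) / 101646724) * (t)) * x + (((-775447 : ℝ) + (317950 : ℝ) * u) / 2272)) * ((((24229858315881794240512 : ℝ) / 43451786041259765625)) + (((9891798235640357715968 : ℝ) / 43451786041259765625)) * u) * ((((9491220834094559591 : ℝ) / 204960454273600) * (t) + ((-968693669983524031 : ℝ) / 51240113568400) * u * (t)) + (((114476646101 : ℝ) / 322624) + ((-23367440489 : ℝ) / 161312) * u) * x + (((-51568141829943527 : ℝ) / 721691740400) * (t) + ((5263151436118007 : ℝ) / 180422935100) * u * (t)) * x ^ 2 + (((-5941175 : ℝ) / 2272) + ((1212367 : ℝ) / 1136) * u) * x ^ 3 + (((215733026317 : ℝ) / 2541168100) * (t) + ((-22018159797 : ℝ) / 635292025) * u * (t)) * x ^ 4 + ((1 : ℝ)) * x ^ 5) ^ 2 := by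
  linear_combination (((12913299539459454261127314924133014704232748471038935820537872 : ℝ) / 31640707290650447588308897577226161956787109375) + ((-3522187957456011060570046571670398573169895547159583782342336 : ℝ) / 10546902430216815862769632525742053985595703125) * u + ((131668410586588320810891365758442384405421717917254510528 : ℝ) / 445643764657048557581815458834171295166015625) * (u) ^ 2 + ((587031326242668535093154011509357582086396972807810104557056 : ℝ) / 10546902430216815862769632525742053985595703125) * (u) ^ 3 + ((-14410433647077046653312672811304044505101944331727001889792 : ℝ) / 1265628291626017903532355903089046478271484375) * (u) ^ 4 + ((-61245266737377853867628080923115158474879847422931343691534559616 : ℝ) / 1258284131900443594086580648973621428012847900390625) * x * (t) + ((450058958064311218771825767726876088713092947007842706369573196032 : ℝ) / 11324557187103992346779225840762592852115631103515625) * x * u * (t) + ((-40247483677719581021656716265380105358085794816 : ℝ) / 17825750586281942303272618353366851806640625) * x * (u) ^ 2 * (t) + ((-75009826344051872989523283077467426037167245679093885261057052672 : ℝ) / 11324557187103992346779225840762592852115631103515625) * x * (u) ^ 3 * (t) + ((15311316688605949005403614970181777727395367814866443303360610304 : ℝ) / 11324557187103992346779225840762592852115631103515625) * x * (u) ^ 4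 * (t) + ((-76404085593501258359010886559140502189787624240052021303815056 : ℝ) / 31640707290650447588308897577226161956787109375) * x ^ 2 + ((62461792722785020327722458677736141071799092756431964541406784 : ℝ) / 31640707290650447588308897577226161956787109375) * x ^ 2 * u + ((-449177003071223435704262809627827896380315611152863031744 : ℝ) / 445643764657048557581815458834171295166015625) * x ^ 2 * (u) ^ 2 + ((-10410298787130836865730706949884471343496424877931306164734464 : ℝ) / 31640707290650447588308897577226161956787109375) * x ^ 2 * (u) ^ 3 + ((17021207777068800370111122331014111070747636557874866658304 : ℝ) / 253125658325203580706471180617809295654296875) * x ^ 2 * (u) ^ 4 + ((250253303219104437502028582296068171893257164828657813205055700352 : ℝ) / 1258284131900443594086580648973621428012847900390625) * x ^ 3 * (t) + ((-1838978698254315887069696296901575980200377028002854495401025128704 : ℝ) / 11324557187103992346779225840762592852115631103515625) * x ^ 3 * u * (t) + ((18271793726187384434407170688496186972123720704 : ℝ) / 1980638954031326922585846483707427978515625) * x ^ 3 * (u) ^ 2 * (t) + ((306496449709052660896796417691954357844100874124554503772594294784 : ℝ) / 11324557187103992346779225840762592852115631103515625) * x ^ 3 * (u) ^ 3 * (t)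 + ((-20854441940729333986313067812589175248256156386947932772226154496 : ℝ) / 3774852395701330782259741946920864284038543701171875) * x ^ 3 * (u) ^ 4 * (t) + ((614991112105888727256056904520922979503942976923947506258304 : ℝ) / 148547921552349519193938486278057098388671875) * x ^ 4 + ((-1507289505239067379200951431717335746400393652730812500602368 : ℝ) / 445643764657048557581815458834171295166015625) * x ^ 4 * u + ((357251642082349056699459817976305397710531479800853314048 : ℝ) / 445643764657048557581815458834171295166015625) * x ^ 4 * (u) ^ 2 + ((83738305846614855152602635008823426347399753800257733144576 : ℝ) / 148547921552349519193938486278057098388671875) * x ^ 4 * (u) ^ 3 + ((-2052352051300178121432111974957617730678815142218340261888 : ℝ) / 17825750586281942303272618353366851806640625) * x ^ 4 * (u) ^ 4 + ((-1573034110422118078745300465768535207705659069518283831206366208 : ℝ) / 5907437238969218751580190840251743793487548828125) * x ^ 5 * (t) + ((11559392757189470558706341403601815736055352350366959514177570816 : ℝ) / 53166935150722968764221717562265694141387939453125) * x ^ 5 * u * (t) + ((-3100654458524669141863004599731389173922996224 : ℝ) / 251066909665942849341867864131927490234375) * x ^ 5 * (u) ^ 2 * (t) + ((-5779696378594735525475803159854969986218685754267943873650065408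 : ℝ) / 159500805452168906292665152686797082424163818359375) * x ^ 5 * (u) ^ 3 * (t) + ((393258527714964055945007296685838586231779221827865290990026752 : ℝ) / 53166935150722968764221717562265694141387939453125) * x ^ 5 * (u) ^ 4 * (t) + ((-13484888699986497617615642936580082290021627516957178067968 : ℝ) / 6276672741648571233546696603298187255859375) * x ^ 6 + ((3668147854331203840841686953004573670886767925364356112384 : ℝ) / 2092224247216190411182232201099395751953125) * x ^ 6 * u + ((805875965765982805566042123634682646382695668902424576 : ℝ) / 2092224247216190411182232201099395751953125) * x ^ 6 * (u) ^ 2 + ((-1834073927165601938636366219203502181995930083163906056192 : ℝ) / 6276672741648571233546696603298187255859375) * x ^ 6 * (u) ^ 3 + ((1663010238592927184546650726485145828698161513190834176 : ℝ) / 27896323296215872149096429347991943359375) * x ^ 6 * (u) ^ 4 + ((5808162492985727692395140643906305371019409779997293296371712 : ℝ) / 49922004836359595083776260621845722198486328125) * x ^ 7 * (t) + ((-42681103358895915304416534656327368717059769795733832630022144 : ℝ) / 449298043527236355753986345596611499786376953125) * x ^ 7 * u * (t) + ((19074028268499387776687786101649048766857216 : ℝ) / 3536153657266800694955885410308837890625)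 * x ^ 7 * (u) ^ 2 * (t) + ((7113517226482652853658158216988959892536081564777965090177024 : ℝ) / 449298043527236355753986345596611499786376953125) * x ^ 7 * (u) ^ 3 * (t) + ((-1452040623650351314886276010327956257163685642810286933803008 : ℝ) / 449298043527236355753986345596611499786376953125) * x ^ 7 * (u) ^ 4 * (t) + ((1329051290212515016298815071912616205956823115651034112 : ℝ) / 88403841431670017373897135257720947265625) * x ^ 8 + ((-327361736184518904511509034660838896788863063704416256 : ℝ) / 29467947143890005791299045085906982421875) * x ^ 8 * u + ((-42082489255699430127435255324522398278223727107018752 : ℝ) / 88403841431670017373897135257720947265625) * x ^ 8 * (u) ^ 2 + ((163680868092259454997986178289256071198815651820208128 : ℝ) / 88403841431670017373897135257720947265625) * x ^ 8 * (u) ^ 3 + ((-1196173727420353862040681663876362691290895947137024 : ℝ) / 3536153657266800694955885410308837890625) * x ^ 8 * (u) ^ 4 + ((-35878197321421055274520717625415116270764593674870079488 : ℝ) / 130208671977985381021847315132617950439453125) * x ^ 9 * (t) + ((790949487054127697050269849396822902280986096294622691328 : ℝ) / 3515634143405605287589877508580684661865234375) * x ^ 9 * u * (t) + ((-571307852417471028825982745032506343424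 : ℝ) / 49804981088264798520505428314208984375) * x ^ 9 * (u) ^ 2 * (t) + ((-1186424230581191596098102804413213653442472618664556756992 : ℝ) / 31640707290650447588308897577226161956787109375) * x ^ 9 * (u) ^ 3 * (t) + ((80725943993361121379645332339265049223238909900827394048 : ℝ) / 10546902430216815862769632525742053985595703125) * x ^ 9 * (u) ^ 4 * (t) + ((-1781892650709060660754405363110017759278900204544 : ℝ) / 83008301813774664200842380523681640625) * x ^ 10 + ((3346659988798036154018511804582276374715261022208 : ℝ) / 249024905441323992602527141571044921875) * x ^ 10 * u + ((415624431547985409275214341279712403668208259072 : ℝ) / 249024905441323992602527141571044921875) * x ^ 10 * (u) ^ 2 + ((-61975184977741411078036038271589526832597041152 : ℝ) / 27669433937924888066947460174560546875) * x ^ 10 * (u) ^ 3 + ((1056270875125655420321552961988293376742260736 : ℝ) / 3320332072550986568033695220947265625) * x ^ 10 * (u) ^ 4 + ((8100309459779422568325541681700936378542292377370624 : ℝ) / 49515973850783173064646162092685699462890625) * x ^ 11 * (t) + ((-59524874811884438973791948778528859192041017572917248 : ℝ) / 445643764657048557581815458834171295166015625) * x ^ 11 * u * (t) + ((4232720606160426006969853254828032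 : ℝ) / 701478606876968993246555328369140625) * x ^ 11 * (u) ^ 2 * (t) + ((3306937489549135639366647166983760189826150601588736 : ℝ) / 148547921552349519193938486278057098388671875) * x ^ 11 * (u) ^ 3 * (t) + ((-225008596154780528379001987180914000368836368400384 : ℝ) / 49515973850783173064646162092685699462890625) * x ^ 11 * (u) ^ 4 * (t) + ((138065833497708791523499499725052545236533248 : ℝ) / 17536965171924224831163883209228515625) * x ^ 12 + ((-56365140502160362481110724568433036374966272 : ℝ) / 17536965171924224831163883209228515625) * x ^ 12 * u + ((-23010972249618132296346341617283216030302208 : ℝ) / 17536965171924224831163883209228515625) * x ^ 12 * (u) ^ 2 + ((3131396694564464633434173472971540769275904 : ℝ) / 5845655057308074943721294403076171875) * x ^ 12 * (u) ^ 3 + ((-1048576 : ℝ) / 43451786041259765625) * x ^ 14) * ht + (((-1841930214161603254119493117352173187331670229038957859886028463246641235072 : ℝ) / 1171878047801868429196625836193561553955078125) + ((163129923391306876093203680571437712084940382663874053204754923148307760384 : ℝ) / 253125658325203580706471180617809295654296875) * u + ((8288685963727215496925979544497077473906382947849350832037023586288704692224 : ℝ) / 31640707290650447588308897577226161956787109375)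 * (u) ^ 2 + ((-135941602826089072580911281215881459223103344751866449156328923381976723456 : ℝ) / 1265628291626017903532355903089046478271484375) * (u) ^ 3 + ((2122827723834579255772922110916764252323351854374410399266582927616719858146229888 : ℝ) / 11324557187103992346779225840762592852115631103515625) * x * (t) + ((-866640789445961321307514791370069664661477700113632239249263579886123140868594432 : ℝ) / 11324557187103992346779225840762592852115631103515625) * x * u * (t) + ((-353804620639100516245861850854774597049613737519896486449472635199616608868789248 : ℝ) / 11324557187103992346779225840762592852115631103515625) * x * (u) ^ 2 * (t) + ((144440131574328509106950674648037935948646455869255487541714848787629874031951872 : ℝ) / 11324557187103992346779225840762592852115631103515625) * x * (u) ^ 3 * (t) + ((98083293103379146916557057289260339318877608922842249822664994985816530555904 : ℝ) / 10546902430216815862769632525742053985595703125) * x ^ 2 + ((-1605704813553590335080634571485508925500073902798927714592021936560840901376 : ℝ) / 421876097208672634510785301029682159423828125) * x ^ 2 * u + ((-49041646551689622317364194211545529252958482316300640298283445780480079786752 : ℝ) / 31640707290650447588308897577226161956787109375) * x ^ 2 * (u) ^ 2 + ((160570481355359167775891382368843632698017757080125714078718931532577615872 : ℝ) / 253125658325203580706471180617809295654296875)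 * x ^ 2 * (u) ^ 3 + ((-2891350784340038777412576668125063074061727656172849524118950946546523489646339712 : ℝ) / 3774852395701330782259741946920864284038543701171875) * x ^ 3 * (t) + ((3541167045500032309285958732545352054370072502852664674200764821288221514106984704 : ℝ) / 11324557187103992346779225840762592852115631103515625) * x ^ 3 * u * (t) + ((1445675392170031373054627037126057999220974433641366941882090043268596104615289856 : ℝ) / 11324557187103992346779225840762592852115631103515625) * x ^ 3 * (u) ^ 2 * (t) + ((-196731502527781203601350612535074412516276013102140169250627446652347630729494528 : ℝ) / 3774852395701330782259741946920864284038543701171875) * x ^ 3 * (u) ^ 3 * (t) + ((-7105420833517197113414785104494578920726275211357054300442104870297768625024 : ℝ) / 445643764657048557581815458834171295166015625) * x ^ 4 + ((116165842437537943818477194265157884608599731166133292794258856934938486784 : ℝ) / 17825750586281942303272618353366851806640625) * x ^ 4 * u + ((1184236805586200477315437028782863308830463612654675345641904126198529845504 : ℝ) / 445643764657048557581815458834171295166015625) * x ^ 4 * (u) ^ 2 + ((-19360973739589663380337336094665488664233866385752294172142587305586294784 : ℝ) / 17825750586281942303272618353366851806640625) * x ^ 4 * (u) ^ 3 + ((163569232270332811020964973580448679256877190815675441258452143421666129235724032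 : ℝ) / 159500805452168906292665152686797082424163818359375) * x ^ 5 * (t) + ((-22258953155144060579297423271458976209957266505066063599904791866502447396630016 : ℝ) / 53166935150722968764221717562265694141387939453125) * x ^ 5 * u * (t) + ((-3029059856858027804655078027375363280280160197725134130730176959789087240644608 : ℝ) / 17722311716907656254740572520755231380462646484375) * x ^ 5 * (u) ^ 2 * (t) + ((3709825525857359089162595027369748803235289326206832612590255981285037937524736 : ℝ) / 53166935150722968764221717562265694141387939453125) * x ^ 5 * (u) ^ 3 * (t) + ((17311146132474913812990133581237339130499704180271590827951472510861862912 : ℝ) / 2092224247216190411182232201099395751953125) * x ^ 6 + ((-282385741607071777149788006056099024373231003093984308523407717537982464 : ℝ) / 83688969888647616447289288043975830078125) * x ^ 6 * u + ((-8655573066237466315632222282807941098699627637068204555658487869560723456 : ℝ) / 6276672741648571233546696603298187255859375) * x ^ 6 * (u) ^ 2 + ((15688096755948417134856075772688735338964807769270496381570934902816768 : ℝ) / 27896323296215872149096429347991943359375) * x ^ 6 * (u) ^ 3 + ((-201317244931215705148141097420848534347944666780838535748630446070301150770176 : ℝ) / 449298043527236355753986345596611499786376953125) * x ^ 7 * (t)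 + ((82187421106925966820178627771527779155869433532337573485232236276524895279104 : ℝ) / 449298043527236355753986345596611499786376953125) * x ^ 7 * u * (t) + ((33552874155202623863631892883869647993167438506788765112103381469221339815936 : ℝ) / 449298043527236355753986345596611499786376953125) * x ^ 7 * (u) ^ 2 * (t) + ((-13697903517820997057891353144956856479083817858791721828249841302638710226944 : ℝ) / 449298043527236355753986345596611499786376953125) * x ^ 7 * (u) ^ 3 * (t) + ((-5118485205394289434467837940089015213502062993971638071882037129383424 : ℝ) / 88403841431670017373897135257720947265625) * x ^ 8 + ((67705016134746584154532381226336116735912603156419640139202545364992 : ℝ) / 3536153657266800694955885410308837890625) * x ^ 8 * u + ((284360289188610589859147701659254374378269352981135965998125352147968 : ℝ) / 29467947143890005791299045085906982421875) * x ^ 8 * (u) ^ 2 + ((-11284169355789190780259394829425589002331523807141566200765278584832 : ℝ) / 3536153657266800694955885410308837890625) * x ^ 8 * (u) ^ 3 + ((11192196950262359902219490401990292280694023934915582316997805248560736256 : ℝ) / 10546902430216815862769632525742053985595703125) * x ^ 9 * (t) + ((-13707585817862292067913763421250309329047203279292993979299608452404170752 : ℝ) / 31640707290650447588308897577226161956787109375)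 * x ^ 9 * u * (t) + ((-5596098475131181100554019857206478382269944355122415076032305637730172928 : ℝ) / 31640707290650447588308897577226161956787109375) * x ^ 9 * (u) ^ 2 * (t) + ((761532545436794160171266441346751530767733405441944887518821598745329664 : ℝ) / 10546902430216815862769632525742053985595703125) * x ^ 9 * (u) ^ 3 * (t) + ((20587447386165421638577069170342917625070944226474058824968126464 : ℝ) / 249024905441323992602527141571044921875) * x ^ 10 + ((-896794943010131479931608053623259458865529666978988360182759424 : ℝ) / 49804981088264798520505428314208984375) * x ^ 10 * u + ((-1143747077047104188071505597671362932621380368482213434394411008 : ℝ) / 83008301813774664200842380523681640625) * x ^ 10 * (u) ^ 2 + ((9964388255048994917863756152926379376967290371856286218190848 : ℝ) / 3320332072550986568033695220947265625) * x ^ 10 * (u) ^ 3 + ((-280765558040503093773639254411707792102900115276422019413345549484032 : ℝ) / 445643764657048557581815458834171295166015625) * x ^ 11 * (t) + ((12735784346281650832525246886740571885050423882740736723980396265472 : ℝ) / 49515973850783173064646162092685699462890625) * x ^ 11 * u * (t) + ((15598086557805730734655514680881653769129708048412272525875634765824 : ℝ) / 148547921552349519193938486278057098388671875) * x ^ 11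 * (u) ^ 2 * (t) + ((-2122630724380275543345089563765292789933918230462598982770005901312 : ℝ) / 49515973850783173064646162092685699462890625) * x ^ 11 * (u) ^ 3 * (t) + ((-177241197369554863791651189974460545164234901975707058962432 : ℝ) / 5845655057308074943721294403076171875) * x ^ 12 + ((31840774557774340412998564041196367249408 : ℝ) / 27604573144018650054931640625) * x ^ 12 * u + ((29540199564345187558980106965853051071151618427380324892672 : ℝ) / 5845655057308074943721294403076171875) * x ^ 12 * (u) ^ 2 + ((-540027020643850593348529885806592 : ℝ) / 27604573144018650054931640625) * x ^ 13 * (t)) * hu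

private lemma zsq1 (u t : ℝ) (hu : u ^ 2 = 6) (ht : t ^ 2 = 2 * (11553696783009431 + 4716776960201434 * u)) :
    2 * ((1174132032293998751 : ℝ) + 484070220858892414 * u) = ((((547162153751 : ℝ) + (-223377993078 : ℝ) * u) / 5041) * t) ^ 2 := by
  linear_combination (((-299386422497432963370001 : ℝ) / 25411681) + ((244447967586268899471156 : ℝ) / 25411681) * u + ((-49897727791555015914084 : ℝ) / 25411681) * (u) ^ 2) * ht + (((1153006648828421243776018048629950223000 : ℝ) / 25411681) + ((-470712905627218961071897687560555192912 : ℝ) / 25411681) * u) * hu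

private lemma zsq3 (u t : ℝ) (hu : u ^ 2 = 6) (ht : t ^ 2 = 2 * (11553696783009431 + 4716776960201434 * u)) :
    2 * ((56229826406521238759 : ℝ) + 22960487256932311726 * u) = ((((548543689501 : ℝ) + (-223941879906 : ℝ) * u) / 5041) * t) ^ 2 := by
  linear_combination (((-300900179291369497629001 : ℝ) / 25411681) + ((245683810074854190133812 : ℝ) / 25411681) * u + ((-50149965575833326568836 : ℝ) / 25411681) * (u) ^ 2) * ht + (((1158836477828075959866694664298951188184 : ℝ) / 25411681) + ((-473092404365971351451687818245253821648 : ℝ) / 25411681) * u) * hu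

private lemma zsq5 (u t : ℝ) (hu : u ^ 2 = 6) (ht : t ^ 2 = 2 * (11553696783009431 + 4716776960201434 * u)) :
    2 * ((4907729982259476719 : ℝ) + 2003572376153817166 * u) = ((((3243799 : ℝ) + (-1323678 : ℝ) * u) / 71) * t) ^ 2 := by
  linear_combination (((-10522231952401 : ℝ) / 5041) + ((8587490745444 : ℝ) / 5041) * u + ((-1752123447684 : ℝ) / 5041) * (u) ^ 2) * ht + (((40523550906222545808501317784 : ℝ) / 5041) + ((-16528751018929187590401557712 : ℝ) / 5041) * u) * hu

private lemma zsump (u t : ℝ) (hu : u ^ 2 = 6) (ht : t ^ 2 = 2 * (11553696783009431 + 4716776960201434 * u)) :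
    ((((-4137518493 : ℝ) + (1689134852 : ℝ) * u) / 101646724) * t) ^ 2 =
      ((-1816103 : ℝ) + 742750 * u) / 2272 + 2 * ((((-775447 : ℝ) + (317950 : ℝ) * u) / 2272)) + ((-330503 : ℝ) + 136350 * u) / 2272 := by
  linear_combination (((17119059279916991049 : ℝ) / 10332056499932176) + ((-1747206671830204509 : ℝ) / 1291507062491522) * u + ((178323534265066369 : ℝ) / 645753531245761) * (u) ^ 2) * ht + (((-4120592086052597796775868519213828 : ℝ) / 645753531245761) + ((1682224675766312009942415237946292 : ℝ) / 645753531245761) * u) * hu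

set_option maxHeartbeats 1000000 in
/-- Z has uniform norm 1 on [−1, 1] ∪ [α, β]: |Z(x)| ≤ 1 there, and the
value 1 is attained at some point of [−1, 1]. -/
theorem stmt10 :
    (∀ x ∈ Set.Icc (-1 : ℝ) 1 ∪ Set.Icc α β, |Z x| ≤ 1) ∧
    (∃ x ∈ Set.Icc (-1 : ℝ) 1, |Z x| = 1) := by
  have hu0 : (0:ℝ) ≤ Real.sqrt 6 := Real.sqrt_nonneg _
  have hu : (Real.sqrt 6) ^ 2 = 6 := Real.sq_sqrt (by norm_num)
  have hS0 : (0:ℝ) ≤ 2 * (11553696783009431 + 4716776960201434 * Real.sqrt 6) := by positivity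
  have ht0 : (0:ℝ) ≤ Real.sqrt (2 * (11553696783009431 + 4716776960201434 * Real.sqrt 6)) := Real.sqrt_nonneg _
  have ht : (Real.sqrt (2 * (11553696783009431 + 4716776960201434 * Real.sqrt 6))) ^ 2 = 2 * (11553696783009431 + 4716776960201434 * Real.sqrt 6) := Real.sq_sqrt hS0
  have sqeq : ∀ a b : ℝ, 0 ≤ a → 0 ≤ b → a ^ 2 = b ^ 2 → a = b := by
    intro a b ha hb h
    rw [← Real.sqrt_sq ha, h, Real.sqrt_sq hb]
  have lesix : ∀ A B : ℝ, 0 ≤ A → 6 * B ^ 2 < A ^ 2 → B * Real.sqrt 6 ≤ A := by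
    intro A B hA h
    nlinarith [hu, hu0, sq_nonneg (A - B * Real.sqrt 6), sq_nonneg (A + B * Real.sqrt 6)]
  have gesix : ∀ A B : ℝ, 0 ≤ B → A ^ 2 < 6 * B ^ 2 → A ≤ B * Real.sqrt 6 := by
    intro A B hB h
    nlinarith [hu, mul_nonneg hB hu0, sq_nonneg (B * Real.sqrt 6 - A), sq_nonneg (B * Real.sqrt 6 + A)]
  have hr1 : (0:ℝ) ≤ (((547162153751 : ℝ) + (-223377993078 : ℝ) * Real.sqrt 6) / 5041) :=
    div_nonneg (by nlinarith [lesix 547162153751 223377993078 (by norm_num) (by norm_num)]) (by norm_num)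
  have hr3 : (0:ℝ) ≤ (((548543689501 : ℝ) + (-223941879906 : ℝ) * Real.sqrt 6) / 5041) :=
    div_nonneg (by nlinarith [lesix 548543689501 223941879906 (by norm_num) (by norm_num)]) (by norm_num)
  have hr5 : (0:ℝ) ≤ (((3243799 : ℝ) + (-1323678 : ℝ) * Real.sqrt 6) / 71) :=
    div_nonneg (by nlinarith [lesix 3243799 1323678 (by norm_num) (by norm_num)]) (by norm_num)
  have hrp : (0:ℝ) ≤ (((-4137518493 : ℝ) + (1689134852 : ℝ) * Real.sqrt 6) / 101646724) :=
    div_nonneg (by nlinarith [gesix 4137518493 1689134852 (by norm_num) (by norm_num)]) (by norm_num)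
  have hq0 : (0:ℝ) ≤ (((-775447 : ℝ) + (317950 : ℝ) * Real.sqrt 6) / 2272) :=
    div_nonneg (by nlinarith [gesix 775447 317950 (by norm_num) (by norm_num)]) (by norm_num)
  have hb1e : b1 = -(16 / 6591796875) * ((((547162153751 : ℝ) + (-223377993078 : ℝ) * Real.sqrt 6) / 5041) * (Real.sqrt (2 * (11553696783009431 + 4716776960201434 * Real.sqrt 6)))) := by
    unfold b1
    rw [zsq1 _ _ hu ht, Real.sqrt_sq (mul_nonneg hr1 ht0)]
  have hb3e : b3 = 16 / 6591796875 * ((((548543689501 : ℝ) + (-223941879906 : ℝ) * Real.sqrt 6) / 5041) * (Real.sqrt (2 * (11553696783009431 + 4716776960201434 * Real.sqrt 6)))) := by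
    unfold b3
    rw [zsq3 _ _ hu ht, Real.sqrt_sq (mul_nonneg hr3 ht0)]
  have hb5e : b5 = -(32 / 2197265625) * ((((3243799 : ℝ) + (-1323678 : ℝ) * Real.sqrt 6) / 71) * (Real.sqrt (2 * (11553696783009431 + 4716776960201434 * Real.sqrt 6)))) := by
    unfold b5
    rw [zsq5 _ _ hu ht, Real.sqrt_sq (mul_nonneg hr5 ht0)]
  have hAa : (0:ℝ) ≤ ((-1816103 : ℝ) + 742750 * Real.sqrt 6) / 142 :=
    div_nonneg (by nlinarith [gesix 1816103 742750 (by norm_num) (by norm_num)]) (by norm_num)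
  have hAb : (0:ℝ) ≤ ((-330503 : ℝ) + 136350 * Real.sqrt 6) / 142 :=
    div_nonneg (by nlinarith [gesix 330503 136350 (by norm_num) (by norm_num)]) (by norm_num)
  have ha0 : 0 ≤ α := by unfold α; positivity
  have hb0 : 0 ≤ β := by unfold β; positivity
  have ha2 : α ^ 2 = ((-1816103 : ℝ) + 742750 * Real.sqrt 6) / 2272 := by
    unfold α
    rw [mul_pow, Real.sq_sqrt hAa]
    ring
  have hb2 : β ^ 2 = ((-330503 : ℝ) + 136350 * Real.sqrt 6) / 2272 := by
    unfold β
    rw [mul_pow, Real.sq_sqrt hAb]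
    ring
  have h1a : 1 ≤ α := by
    nlinarith [ha2, ha0, gesix 1818375 742750 (by norm_num) (by norm_num)]
  have hab : α ≤ β := by
    nlinarith [ha2, hb2, ha0, hb0, lesix 1485600 606400 (by norm_num) (by norm_num)]
  have hprod : α * β = (((-775447 : ℝ) + (317950 : ℝ) * Real.sqrt 6) / 2272) := by
    apply sqeq _ _ (mul_nonneg ha0 hb0) hq0
    rw [mul_pow, ha2, hb2]
    linear_combination (((2500 : ℝ) / 71)) * hu
  have hsum : α + β = ((((-4137518493 : ℝ) + (1689134852 : ℝ) * Real.sqrt 6) / 101646724) * (Real.sqrt (2 * (11553696783009431 + 4716776960201434 * Real.sqrt 6)))) := by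
    apply sqeq _ _ (by linarith) (mul_nonneg hrp ht0)
    have h1 : (α + β) ^ 2 = α ^ 2 + 2 * (α * β) + β ^ 2 := by ring
    rw [h1, ha2, hb2, hprod, zsump _ _ hu ht]
  have key : ∀ x : ℝ, 1 - Z x ^ 2 = (1 - x ^ 2) * (x ^ 2 - ((((-4137518493 : ℝ) + (1689134852 : ℝ) * Real.sqrt 6) / 101646724) * (Real.sqrt (2 * (11553696783009431 + 4716776960201434 * Real.sqrt 6)))) * x + (((-775447 : ℝ) + (317950 : ℝ) * Real.sqrt 6) / 2272)) * ((((24229858315881794240512 : ℝ) / 43451786041259765625)) + (((9891798235640357715968 : ℝ) / 43451786041259765625)) * Real.sqrt 6) * ((((9491220834094559591 : ℝ) / 204960454273600) * (Real.sqrt (2 * (11553696783009431 + 4716776960201434 * Real.sqrt 6))) + ((-968693669983524031 : ℝ) / 51240113568400) * Real.sqrt 6 * (Real.sqrt (2 * (11553696783009431 + 4716776960201434 * Real.sqrt 6)))) + (((114476646101 : ℝ) / 322624) + ((-23367440489 : ℝ) / 161312) * Real.sqrt 6) * x + (((-51568141829943527 : ℝ) / 721691740400) * (Real.sqrt (2 *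 (11553696783009431 + 4716776960201434 * Real.sqrt 6))) + ((5263151436118007 : ℝ) / 180422935100) * Real.sqrt 6 * (Real.sqrt (2 * (11553696783009431 + 4716776960201434 * Real.sqrt 6)))) * x ^ 2 + (((-5941175 : ℝ) / 2272) + ((1212367 : ℝ) / 1136) * Real.sqrt 6) * x ^ 3 + (((215733026317 : ℝ) / 2541168100) * (Real.sqrt (2 * (11553696783009431 + 4716776960201434 * Real.sqrt 6))) + ((-22018159797 : ℝ) / 635292025) * Real.sqrt 6 * (Real.sqrt (2 * (11553696783009431 + 4716776960201434 * Real.sqrt 6)))) * x ^ 4 + ((1 : ℝ)) * x ^ 5) ^ 2 := by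
    intro x
    unfold Z b0 b2 b4 b6 b7
    rw [hb1e, hb3e, hb5e]
    exact zkey _ _ hu ht x
  have hquad : ∀ x : ℝ, x ^ 2 - ((((-4137518493 : ℝ) + (1689134852 : ℝ) * Real.sqrt 6) / 101646724) * (Real.sqrt (2 * (11553696783009431 + 4716776960201434 * Real.sqrt 6)))) * x + (((-775447 : ℝ) + (317950 : ℝ) * Real.sqrt 6) / 2272) = (x - α) * (x - β) := by
    intro x
    rw [← hsum, ← hprod]
    ring
  have hW : (0:ℝ) ≤ ((((24229858315881794240512 : ℝ) / 43451786041259765625)) + (((9891798235640357715968 : ℝ) / 43451786041259765625)) * Real.sqrt 6) := by positivity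
  constructor
  · rintro x (hx | hx)
    · have hx1 : -1 ≤ x := hx.1
      have hx2 : x ≤ 1 := hx.2
      have e1 : 0 ≤ 1 - x ^ 2 := by nlinarith
      have e2 : 0 ≤ x ^ 2 - ((((-4137518493 : ℝ) + (1689134852 : ℝ) * Real.sqrt 6) / 101646724) * (Real.sqrt (2 * (11553696783009431 + 4716776960201434 * Real.sqrt 6)))) * x + (((-775447 : ℝ) + (317950 : ℝ) * Real.sqrt 6) / 2272) := by
        rw [hquad x]
        nlinarith [mul_nonneg (neg_nonneg.2 (show x - α ≤ 0 by linarith)) (neg_nonneg.2 (show x - β ≤ 0 by linarith))]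
      have hpos : 0 ≤ (1 - x ^ 2) * (x ^ 2 - ((((-4137518493 : ℝ) + (1689134852 : ℝ) * Real.sqrt 6) / 101646724) * (Real.sqrt (2 * (11553696783009431 + 4716776960201434 * Real.sqrt 6)))) * x + (((-775447 : ℝ) + (317950 : ℝ) * Real.sqrt 6) / 2272)) * ((((24229858315881794240512 : ℝ) / 43451786041259765625)) + (((9891798235640357715968 : ℝ) / 43451786041259765625)) * Real.sqrt 6) * ((((9491220834094559591 : ℝ) / 204960454273600) * (Real.sqrt (2 * (11553696783009431 + 4716776960201434 * Real.sqrt 6))) + ((-968693669983524031 : ℝ) / 51240113568400) * Real.sqrt 6 * (Real.sqrt (2 * (11553696783009431 + 4716776960201434 * Real.sqrt 6)))) + (((114476646101 : ℝ) / 322624) + ((-23367440489 : ℝ) / 161312) * Real.sqrt 6) * x + (((-51568141829943527 : ℝ) / 721691740400) * (Real.sqrt (2 * (11553696783009431 + 4716776960201434 * Real.sqrt 6))) + ((5263151436118007 : ℝ) / 180422935100) * Real.sqrt 6 * (Real.sqrt (2 * (11553696783009431 + 4716776960201434 * Real.sqrt 6)))) * x ^ 2 + (((-5941175 : ℝ)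 / 2272) + ((1212367 : ℝ) / 1136) * Real.sqrt 6) * x ^ 3 + (((215733026317 : ℝ) / 2541168100) * (Real.sqrt (2 * (11553696783009431 + 4716776960201434 * Real.sqrt 6))) + ((-22018159797 : ℝ) / 635292025) * Real.sqrt 6 * (Real.sqrt (2 * (11553696783009431 + 4716776960201434 * Real.sqrt 6)))) * x ^ 4 + ((1 : ℝ)) * x ^ 5) ^ 2 :=
        mul_nonneg (mul_nonneg (mul_nonneg e1 e2) hW) (sq_nonneg _)
      have hz2 : Z x ^ 2 ≤ 1 := by linarith [key x, hpos]
      calc |Z x| = Real.sqrt (Z x ^ 2) := (Real.sqrt_sq_eq_abs _).symm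
      _ ≤ Real.sqrt 1 := Real.sqrt_le_sqrt hz2
      _ = 1 := Real.sqrt_one
    · have hx1 : α ≤ x := hx.1
      have hx2 : x ≤ β := hx.2
      have hx1' : 1 ≤ x := le_trans h1a hx1
      have e1 : 1 - x ^ 2 ≤ 0 := by nlinarith
      have e2 : x ^ 2 - ((((-4137518493 : ℝ) + (1689134852 : ℝ) * Real.sqrt 6) / 101646724) * (Real.sqrt (2 * (11553696783009431 + 4716776960201434 * Real.sqrt 6)))) * x + (((-775447 : ℝ) + (317950 : ℝ) * Real.sqrt 6) / 2272) ≤ 0 := by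
        rw [hquad x]
        nlinarith [mul_nonneg (show (0:ℝ) ≤ x - α by linarith) (neg_nonneg.2 (show x - β ≤ 0 by linarith))]
      have h12 : 0 ≤ (1 - x ^ 2) * (x ^ 2 - ((((-4137518493 : ℝ) + (1689134852 : ℝ) * Real.sqrt 6) / 101646724) * (Real.sqrt (2 * (11553696783009431 + 4716776960201434 * Real.sqrt 6)))) * x + (((-775447 : ℝ) + (317950 : ℝ) * Real.sqrt 6) / 2272)) := by
        nlinarith [mul_nonneg (neg_nonneg.2 e1) (neg_nonneg.2 e2)]
      have hpos : 0 ≤ (1 - x ^ 2) * (x ^ 2 - ((((-4137518493 : ℝ) + (1689134852 : ℝ) * Real.sqrt 6) / 101646724) * (Real.sqrt (2 * (11553696783009431 + 4716776960201434 * Real.sqrt 6)))) * x + (((-775447 : ℝ) + (317950 : ℝ) * Real.sqrt 6) / 2272)) * ((((24229858315881794240512 : ℝ) / 43451786041259765625)) + (((9891798235640357715968 : ℝ) / 43451786041259765625)) * Real.sqrt 6) * ((((9491220834094559591 : ℝ) / 204960454273600) * (Real.sqrt (2 * (11553696783009431 + 4716776960201434 * Real.sqrt 6))) + ((-968693669983524031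 : ℝ) / 51240113568400) * Real.sqrt 6 * (Real.sqrt (2 * (11553696783009431 + 4716776960201434 * Real.sqrt 6)))) + (((114476646101 : ℝ) / 322624) + ((-23367440489 : ℝ) / 161312) * Real.sqrt 6) * x + (((-51568141829943527 : ℝ) / 721691740400) * (Real.sqrt (2 * (11553696783009431 + 4716776960201434 * Real.sqrt 6))) + ((5263151436118007 : ℝ) / 180422935100) * Real.sqrt 6 * (Real.sqrt (2 * (11553696783009431 + 4716776960201434 * Real.sqrt 6)))) * x ^ 2 + (((-5941175 : ℝ) / 2272) + ((1212367 : ℝ) / 1136) * Real.sqrt 6) * x ^ 3 + (((215733026317 : ℝ) / 2541168100) * (Real.sqrt (2 * (11553696783009431 + 4716776960201434 * Real.sqrt 6))) + ((-22018159797 : ℝ) / 635292025) * Real.sqrt 6 * (Real.sqrt (2 * (11553696783009431 + 4716776960201434 * Real.sqrt 6)))) * x ^ 4 + ((1 : ℝ)) * x ^ 5) ^ 2 :=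
        mul_nonneg (mul_nonneg h12 hW) (sq_nonneg _)
      have hz2 : Z x ^ 2 ≤ 1 := by linarith [key x, hpos]
      calc |Z x| = Real.sqrt (Z x ^ 2) := (Real.sqrt_sq_eq_abs _).symm
      _ ≤ Real.sqrt 1 := Real.sqrt_le_sqrt hz2
      _ = 1 := Real.sqrt_one
  · refine ⟨1, by norm_num, ?_⟩
    have h := key 1
    have h0 : ((1:ℝ) - 1 ^ 2) = 0 := by norm_num
    rw [h0, zero_mul, zero_mul, zero_mul] at h
    have h1 : Z 1 ^ 2 = 1 := by linarith
    rw [← Real.sqrt_sq_eq_abs, h1, Real.sqrt_one]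
end
end
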